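/- Let R be a discrete valuation ring with uniformizer π. Let h_(1),...,h_(ℓ) ∈ R[X] be monic of degrees χ_(1) ≤ χ_(2) ≤ ... ≤ χ_(ℓ), each ≥ 1, with h_(k)(X) ≡ X^{χ_(k)} mod π for each k. Write ∏_{k∈[1,ℓ]} h_(k)(X) = ∑_{i∈[0,χ]} b_i X^i where χ = ∑_k χ_(k). Then for every i ∈ [0,χ], val_π(b_i) ≥ ℓ − max{ j ∈ [0,ℓ] : χ_(1)+...+χ_(j) ≤ i }. -/

import Mathlib

open Polynomial Finset

lemma strictMono_le_val {c ℓ : ℕ} (e : Fin c → Fin ℓ) (he : StrictMono e) :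
    ∀ j : Fin c, (j : ℕ) ≤ (e j : ℕ) := by
  intro ⟨j, hj⟩
  induction j with
  | zero => simp
  | succ n ih =>
    have hn : n < c := Nat.lt_of_succ_lt hj
    have h1 := ih hn
    have h2 : e ⟨n, hn⟩ < e ⟨n + 1, hj⟩ := he (by simp [Fin.lt_def])
    have h3 := Fin.lt_def.mp h2
    simp only [Fin.val_mk] at h1 h3 ⊢
    omega

lemma sum_first_le {ℓ : ℕ} (d : Fin ℓ → ℕ) (hd : Monotone d) (t : Finset (Fin ℓ)) :
    ∑ k ∈ Finset.univ.filter (fun k : Fin ℓ => (k : ℕ) < t.card), d k ≤ ∑ k ∈ t, d k := by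
  have hc : t.card ≤ ℓ := by simpa using Finset.card_le_univ t
  set c := t.card with hcdef
  let e := t.orderEmbOfFin rfl
  have h1 : t = Finset.univ.image (fun j : Fin c => e j) := by
    ext k
    simp only [Finset.mem_image, Finset.mem_univ, true_and]
    constructor
    · intro hk
      have : k ∈ Set.range e := by rw [Finset.range_orderEmbOfFin]; exact hk
      obtain ⟨j, hj⟩ := this; exact ⟨j, hj⟩
    · rintro ⟨j, rfl⟩; exact t.orderEmbOfFin_mem rfl j
  have h2 : Finset.univ.filter (fun k : Fin ℓ => (k : ℕ) < c)
      = Finset.univ.image (fun j : Fin c => Fin.castLE hc j) := by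
    ext k
    simp only [Finset.mem_filter, Finset.mem_image, Finset.mem_univ, true_and]
    constructor
    · intro hk; exact ⟨⟨k, hk⟩, rfl⟩
    · rintro ⟨j, rfl⟩; exact j.2
  rw [h1, h2, Finset.sum_image (by intro a _ b _ hab; exact Fin.castLE_injective hc hab),
    Finset.sum_image (by intro a _ b _ hab; exact e.injective hab)]
  apply Finset.sum_le_sum
  intro j _
  exact hd (by simpa [Fin.le_def] using strictMono_le_val e e.strictMono j)

theorem val_coeff_prod_ge
    {R : Type*} [CommRing R] [IsDomain R] [IsDiscreteValuationRing R]
    (π : R) (hπ : Irreducible π)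
    (ℓ : ℕ) (hℓ : 1 ≤ ℓ) (h : Fin ℓ → Polynomial R)
    (hmonic : ∀ k, (h k).Monic)
    (hdeg : ∀ k, 1 ≤ (h k).natDegree)
    (hsort : Monotone fun k => (h k).natDegree)
    (hX : ∀ k, C π ∣ (h k - X ^ (h k).natDegree)) :
    ∀ i ≤ ∑ k, (h k).natDegree,
      π ^ (ℓ - ((Finset.range (ℓ + 1)).filter
            (fun j => (∑ k ∈ Finset.univ.filter (fun k : Fin ℓ => (k : ℕ) < j),
              (h k).natDegree) ≤ i)).max' ⟨0, by simp⟩)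
        ∣ (∏ k, h k).coeff i := by
  intro i hi
  set d : Fin ℓ → ℕ := fun k => (h k).natDegree with hd
  choose g hg using hX
  have hfac : ∀ k, h k = X ^ d k + C π * g k := fun k =>
    sub_eq_iff_eq_add'.mp (hg k)
  set M := ((Finset.range (ℓ + 1)).filter
      (fun j => (∑ k ∈ Finset.univ.filter (fun k : Fin ℓ => (k : ℕ) < j),
        (h k).natDegree) ≤ i)).max' ⟨0, by simp⟩ with hM
  rw [show (∏ k, h k) = ∏ k, (X ^ d k + C π * g k) from
    Finset.prod_congr rfl (fun k _ => hfac k), Finset.prod_add, finset_sum_coeff]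
  apply Finset.dvd_sum
  intro t ht
  have hterm : ((∏ k ∈ t, (X : Polynomial R) ^ d k) *
      ∏ k ∈ Finset.univ \ t, (C π * g k)).coeff i
      = π ^ (ℓ - t.card) * (if (∑ k ∈ t, d k) ≤ i
          then ((∏ k ∈ Finset.univ \ t, g k) * X ^ (∑ k ∈ t, d k)).coeff i
          else 0) := by
    rw [Finset.prod_pow_eq_pow_sum, Finset.prod_mul_distrib, Finset.prod_const,
      Finset.card_sdiff_of_subset (Finset.subset_univ t)]
    simp only [Finset.card_univ, Fintype.card_fin, ← C_pow]
    rw [mul_left_comm, mul_comm ((X:Polynomial R) ^ _), coeff_C_mul]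
    by_cases hn : (∑ k ∈ t, d k) ≤ i
    · rw [if_pos hn]
    · rw [if_neg hn, mul_comm (∏ k ∈ Finset.univ \ t, g k), coeff_X_pow_mul']
      simp [hn]
  rw [hterm]
  have hcard : t.card ≤ ℓ := by simpa using Finset.card_le_univ t
  by_cases hn : (∑ k ∈ t, d k) ≤ i
  · have hmem : t.card ∈ (Finset.range (ℓ + 1)).filter
        (fun j => (∑ k ∈ Finset.univ.filter (fun k : Fin ℓ => (k : ℕ) < j),
          (h k).natDegree) ≤ i) := by
      rw [Finset.mem_filter, Finset.mem_range]
      exact ⟨Nat.lt_succ_of_le hcard, le_trans (sum_first_le d hsort t) hn⟩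
    have hle : t.card ≤ M := Finset.le_max' _ _ hmem
    exact Dvd.dvd.mul_right (pow_dvd_pow π (Nat.sub_le_sub_left hle ℓ)) _
  · rw [if_neg hn, mul_zero]
    exact dvd_zero _
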